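/- arXiv:1711.09225 — 3 statements merged into one kernel-verified Lean document; each statement's English description precedes it below -/
import Mathlib

section
/- Let U be a free Z_p-module of rank 2 with a non-degenerate symmetric bilinear form b: U × U → Z_p, and let L ⊂ U be a rank 1 submodule that is totally isotropic for b. If L is saturated in the dual lattice U^∨ = {x ∈ Q_p ⊗ U | b(x,U) ⊆ Z_p}, then U^∨ = U, i.e. the form b is unimodular on U. -/
/-- Lemma 2.5. Let `U` be a free `ℤ_[p]`-module of rank 2, realized as a
lattice spanning a 2-dimensional `ℚ_[p]`-vector space `V`, with a non-degenerate symmetric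
bilinear form `b` taking `ℤ_[p]`-values on `U`.  If `L ⊆ U` is a rank-1 totally isotropic
submodule which is saturated in the dual lattice
`U^∨ = {x ∈ V | b(x, U) ⊆ ℤ_[p]}`, then `U^∨ = U` (the inclusion `U ⊆ U^∨` being automatic). -/
theorem stmt_0 (p : ℕ) [Fact p.Prime]
    (V : Type*) [AddCommGroup V] [Module ℚ_[p] V]
    [Module ℤ_[p] V] [IsScalarTower ℤ_[p] ℚ_[p] V]
    [FiniteDimensional ℚ_[p] V] (hdim : Module.finrank ℚ_[p] V = 2)
    (b : V →ₗ[ℚ_[p]] V →ₗ[ℚ_[p]] ℚ_[p]) (hsymm : ∀ x y, b x y = b y x)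
    (hnd : ∀ x : V, (∀ y : V, b x y = 0) → x = 0)
    (U : Submodule ℤ_[p] V) (hUfg : U.FG)
    (hUspan : Submodule.span ℚ_[p] (U : Set V) = ⊤)
    (hUint : ∀ x ∈ U, ∀ y ∈ U, ∃ c : ℤ_[p], b x y = (c : ℚ_[p]))
    (L : Submodule ℤ_[p] V) (hLU : L ≤ U)
    (hLrank : ∃ e : V, e ≠ 0 ∧ L = Submodule.span ℤ_[p] {e})
    (hLiso : ∀ x ∈ L, ∀ y ∈ L, b x y = 0)
    (hLsat : ∀ x : V, (∀ u ∈ U, ∃ c : ℤ_[p], b x u = (c : ℚ_[p])) →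
      (p : ℤ_[p]) • x ∈ L → x ∈ L) :
    ∀ x : V, (∀ u ∈ U, ∃ c : ℤ_[p], b x u = (c : ℚ_[p])) → x ∈ U := by
  have hsmul : ∀ (c : ℤ_[p]) (v : V), c • v = (c : ℚ_[p]) • v := fun c v => by
    rw [← algebraMap_smul ℚ_[p] c v, PadicInt.algebraMap_apply]
  obtain ⟨e, he0, hLe⟩ := hLrank
  have heL : e ∈ L := hLe ▸ Submodule.mem_span_singleton_self e
  have heU : e ∈ U := hLU heL
  have bee : b e e = 0 := hLiso e heL e heL
  have hp0 : (p : ℚ_[p]) ≠ 0 := by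
    exact_mod_cast (Fact.out : p.Prime).ne_zero
  have hp1 : (1 : ℝ) < p := by exact_mod_cast (Fact.out : p.Prime).one_lt
  -- Step 1: there exists g ∈ U with ‖b e g‖ = 1
  have hstep1 : ∃ g ∈ U, ‖b e g‖ = 1 := by
    by_contra h
    push_neg at h
    have hdiv : ∀ u ∈ U, ∃ c : ℤ_[p], b e u = (p : ℚ_[p]) * (c : ℚ_[p]) := by
      intro u hu
      obtain ⟨c, hc⟩ := hUint e heU u hu
      have hlt : ‖c‖ < 1 := by
        have h1 : ‖(c : ℚ_[p])‖ = ‖c‖ := PadicInt.padic_norm_e_of_padicInt c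
        have h2 := h u hu
        rw [hc, h1] at h2
        exact lt_of_le_of_ne (PadicInt.norm_le_one c) h2
      obtain ⟨c', hc'⟩ := (PadicInt.norm_lt_one_iff_dvd c).mp hlt
      refine ⟨c', ?_⟩
      rw [hc, hc']
      push_cast
      ring
    set x0 := (p : ℚ_[p])⁻¹ • e with hx0
    have hx0dual : ∀ u ∈ U, ∃ c : ℤ_[p], b x0 u = (c : ℚ_[p]) := by
      intro u hu
      obtain ⟨c, hc⟩ := hdiv u hu
      refine ⟨c, ?_⟩
      rw [hx0, map_smul]
      simp only [LinearMap.smul_apply, smul_eq_mul, hc]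
      field_simp
    have hpx0 : (p : ℤ_[p]) • x0 ∈ L := by
      rw [hsmul, hx0, smul_smul]
      have hcast : ((p : ℤ_[p]) : ℚ_[p]) = (p : ℚ_[p]) := by push_cast; ring
      rw [hcast, mul_inv_cancel₀ hp0, one_smul]
      exact heL
    have hmem := hLsat x0 hx0dual hpx0
    rw [hLe, Submodule.mem_span_singleton] at hmem
    obtain ⟨c, hc⟩ := hmem
    rw [hsmul] at hc
    have hzero : ((c : ℚ_[p]) - (p : ℚ_[p])⁻¹) • e = 0 := by
      rw [sub_smul, hc, hx0, sub_self]
    have hceq : (c : ℚ_[p]) = (p : ℚ_[p])⁻¹ := by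
      rcases smul_eq_zero.mp hzero with h' | h'
      · exact sub_eq_zero.mp h'
      · exact absurd h' he0
    have h1 : ‖(c : ℚ_[p])‖ ≤ 1 := c.2
    rw [hceq, norm_inv, Padic.norm_p, inv_inv] at h1
    linarith
  obtain ⟨g, hgU, hga⟩ := hstep1
  set a := b e g with ha
  have ha0 : a ≠ 0 := by
    intro h'
    rw [h', norm_zero] at hga
    norm_num at hga
  have hge : b g e = a := hsymm g e
  -- linear independence of e, g
  have hind : LinearIndependent ℚ_[p] ![e, g] := by
    rw [LinearIndependent.pair_iff]
    intro s t hst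
    have h1 : b (s • e + t • g) e = 0 := by rw [hst]; simp
    simp only [map_add, map_smul, LinearMap.add_apply, LinearMap.smul_apply, smul_eq_mul,
      bee, hge, mul_zero, zero_add] at h1
    have ht : t = 0 := by
      rcases mul_eq_zero.mp h1 with h' | h'
      · exact h'
      · exact absurd h' ha0
    subst ht
    rw [zero_smul, add_zero] at hst
    rcases smul_eq_zero.mp hst with h' | h'
    · exact ⟨h', rfl⟩
    · exact absurd h' he0
  have hspan : Submodule.span ℚ_[p] (Set.range ![e, g]) = ⊤ :=
    hind.span_eq_top_of_card_eq_finrank (by simp [hdim])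
  have hrange : Set.range ![e, g] = {e, g} := by
    ext v
    simp only [Matrix.range_cons, Matrix.range_empty, Set.union_empty, Set.union_singleton,
      Set.mem_insert_iff, Set.mem_singleton_iff]
    tauto
  intro x hx
  have hxspan : x ∈ Submodule.span ℚ_[p] ({e, g} : Set V) := by
    rw [← hrange, hspan]; trivial
  obtain ⟨s, t, hst⟩ := Submodule.mem_span_pair.mp hxspan
  have hbxe : b x e = t * a := by
    rw [← hst]
    simp only [map_add, map_smul, LinearMap.add_apply, LinearMap.smul_apply, smul_eq_mul,
      bee, hge, mul_zero, zero_add]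
  have hbxg : b x g = s * a + t * b g g := by
    rw [← hst]
    simp only [map_add, map_smul, LinearMap.add_apply, LinearMap.smul_apply, smul_eq_mul, ← ha]
  obtain ⟨c1, hc1⟩ := hx e heU
  obtain ⟨c2, hc2⟩ := hUint g hgU g hgU
  obtain ⟨c3, hc3⟩ := hx g hgU
  have hT : ‖t‖ ≤ 1 := by
    have h1 : ‖t * a‖ ≤ 1 := by rw [← hbxe, hc1]; exact c1.2
    rwa [norm_mul, hga, mul_one] at h1
  have hS : ‖s‖ ≤ 1 := by
    have heq : s * a = b x g - t * b g g := by rw [hbxg]; ring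
    have h1 : ‖s * a‖ ≤ 1 := by
      rw [heq, sub_eq_add_neg]
      refine le_trans (Padic.nonarchimedean _ _) (max_le ?_ ?_)
      · rw [hc3]; exact c3.2
      · rw [norm_neg, norm_mul, hc2]
        calc ‖t‖ * ‖(c2 : ℚ_[p])‖ ≤ 1 * 1 :=
              mul_le_mul hT c2.2 (norm_nonneg _) zero_le_one
          _ = 1 := one_mul 1
    rwa [norm_mul, hga, mul_one] at h1
  let S : ℤ_[p] := ⟨s, hS⟩
  let T : ℤ_[p] := ⟨t, hT⟩
  have hx_eq : x = S • e + T • g := by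
    rw [hsmul, hsmul]
    exact hst.symm
  rw [hx_eq]
  exact U.add_mem (U.smul_mem _ heU) (U.smul_mem _ hgU)
end

section
/- Let δ: G₀ → G₁ be an open continuous homomorphism of profinite groups with finite kernel. Let H be a closed subgroup of G₁ and ρ: H → G₀ a continuous homomorphism with δ ∘ ρ equal to the inclusion H ↪ G₁. Then there exists an open subgroup U of G₁ containing H and a continuous homomorphism ρ': U → G₀ such that ρ' restricts to ρ on H and δ ∘ ρ' is the inclusion U ↪ G₁. -/
open scoped Pointwise

/-- In a profinite group, if `C` is a closed subgroup and `k ∉ C`, there is an open normal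
subgroup `N` with `k ∉ C * N`. -/
lemma aux_avoid {G : Type*} [Group G] [TopologicalSpace G] [IsTopologicalGroup G]
    [CompactSpace G] [T2Space G] [TotallyDisconnectedSpace G]
    (C : Subgroup G) (hC : IsClosed (C : Set G)) {k : G} (hk : k ∉ C) :
    ∃ N : OpenNormalSubgroup G, k ∉ (C : Set G) * (N : Set G) := by
  set T : Set G := (fun c => c⁻¹ * k) '' (C : Set G) with hT
  have hTclosed : IsClosed T := by
    have hcomp : IsCompact (C : Set G) := hC.isCompact
    exact (hcomp.image (by continuity)).isClosed
  have h1T : (1 : G) ∉ T := by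
    rintro ⟨c, hc, hck⟩
    have : c = k := inv_mul_eq_one.mp hck
    exact hk (this ▸ hc)
  obtain ⟨W, hWclopen, h1W, hWsub⟩ :=
    compact_exists_isClopen_in_isOpen hTclosed.isOpen_compl h1T
  obtain ⟨N, hN⟩ :=
    IsTopologicalGroup.exist_openNormalSubgroup_sub_clopen_nhds_of_one hWclopen h1W
  refine ⟨N, ?_⟩
  rintro ⟨c, hc, n, hn, rfl⟩
  have : c⁻¹ * (c * n) ∈ T := ⟨c, hc, rfl⟩
  rw [inv_mul_cancel_left] at this
  exact (hWsub (hN hn)) this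

/-- Lemma 4.3. Let `δ : G₀ → G₁` be an open continuous homomorphism of
profinite groups with finite kernel, `H` a closed subgroup of `G₁`, and `ρ : H → G₀` a
continuous homomorphism with `δ ∘ ρ` the inclusion `H ↪ G₁`.  Then there is an open subgroup
`U ⊆ G₁` containing `H` and a continuous homomorphism `ρ' : U → G₀` restricting to `ρ` on `H`
with `δ ∘ ρ'` the inclusion `U ↪ G₁`. -/
theorem stmt_2 (G₀ G₁ : Type*)
    [Group G₀] [TopologicalSpace G₀] [IsTopologicalGroup G₀]
    [CompactSpace G₀] [T2Space G₀] [TotallyDisconnectedSpace G₀]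
    [Group G₁] [TopologicalSpace G₁] [IsTopologicalGroup G₁]
    [CompactSpace G₁] [T2Space G₁] [TotallyDisconnectedSpace G₁]
    (δ : G₀ →* G₁) (hδc : Continuous δ) (hδo : IsOpenMap δ)
    (hker : (δ.ker : Set G₀).Finite)
    (H : Subgroup G₁) (hH : IsClosed (H : Set G₁))
    (ρ : H →* G₀) (hρc : Continuous ρ)
    (hρδ : ∀ h : H, δ (ρ h) = (h : G₁)) :
    ∃ (U : Subgroup G₁) (_ : IsOpen (U : Set G₁)) (hle : H ≤ U)
      (ρ' : U →* G₀), Continuous ρ' ∧ (∀ u : U, δ (ρ' u) = (u : G₁)) ∧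
      ∀ (x : G₁) (hx : x ∈ H), ρ' ⟨x, hle hx⟩ = ρ ⟨x, hx⟩ := by
  classical
  have : CompactSpace H := isCompact_iff_compactSpace.mp hH.isCompact
  set R : Subgroup G₀ := ρ.range with hR
  have hRclosed : IsClosed (R : Set G₀) := by
    have : IsCompact (Set.range ρ) := isCompact_range hρc
    exact this.isClosed
  -- kernel elements not in R
  have hkR : ∀ k ∈ δ.ker, k ≠ 1 → k ∉ R := by
    rintro k hkker hk1 ⟨h, rfl⟩
    have h1 : (h : G₁) = 1 := by rw [← hρδ h]; exact hkker
    have : h = 1 := Subtype.ext h1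
    exact hk1 (by rw [this, map_one])
  -- choose an open normal subgroup for each nontrivial kernel element
  have hchoice : ∀ k : G₀, ∃ N : OpenNormalSubgroup G₀,
      k ∈ δ.ker → k ≠ 1 → k ∉ (R : Set G₀) * (N : Set G₀) := by
    intro k
    by_cases hk : k ∈ δ.ker ∧ k ≠ 1
    · obtain ⟨N, hN⟩ := aux_avoid R hRclosed (hkR k hk.1 hk.2)
      exact ⟨N, fun _ _ => hN⟩
    · exact ⟨⟨⊤, ⟨fun n _ g => Set.mem_univ _⟩⟩, fun h1 h2 => absurd ⟨h1, h2⟩ hk⟩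
  choose Nk hNk using hchoice
  set Kf : Finset G₀ := hker.toFinset with hKf
  set N : OpenSubgroup G₀ := Kf.inf (fun k => (Nk k).toOpenSubgroup) with hN
  have hNle : ∀ k ∈ Kf, (N : Subgroup G₀) ≤ (Nk k : Subgroup G₀) := by
    intro k hk
    exact_mod_cast (Finset.inf_le hk : N ≤ (Nk k).toOpenSubgroup)
  set P : Subgroup G₀ := R ⊔ (N : Subgroup G₀) with hP
  have hPopen : IsOpen (P : Set G₀) := Subgroup.isOpen_mono le_sup_right N.isOpen
  -- injectivity of δ on P
  have hinj : ∀ p ∈ P, δ p = 1 → p = 1 := by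
    intro p hp hp1
    by_contra hpne
    have hpK : p ∈ Kf := by
      rw [hKf, Set.Finite.mem_toFinset]; exact hp1
    have hle : P ≤ R ⊔ (Nk p : Subgroup G₀) := sup_le_sup_left (hNle p hpK) R
    have : p ∈ (R : Set G₀) * ((Nk p : Subgroup G₀) : Set G₀) := by
      rw [← Subgroup.mul_normal]
      exact hle hp
    exact hNk p hp1 hpne this
  -- P is closed, hence compact
  have hPclosed : IsClosed (P : Set G₀) := P.isClosed_of_isOpen hPopen
  have : CompactSpace P := isCompact_iff_compactSpace.mp hPclosed.isCompact
  set U : Subgroup G₁ := P.map δ with hU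
  have hUopen : IsOpen (U : Set G₁) := hδo _ hPopen
  have hRP : R ≤ P := le_sup_left
  have hHU : H ≤ U := by
    intro x hx
    exact ⟨ρ ⟨x, hx⟩, hRP ⟨⟨x, hx⟩, rfl⟩, hρδ ⟨x, hx⟩⟩
  -- the restricted map
  have hmem : ∀ p : P, δ p ∈ U := fun p => ⟨p, p.2, rfl⟩
  set f : P →* U := (δ.comp P.subtype).codRestrict U hmem with hf
  have hfc : Continuous f := Continuous.subtype_mk (hδc.comp continuous_subtype_val) _
  have hfbij : Function.Bijective f := by
    constructor
    · intro p q hpq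
      have : δ ((p : G₀) * (q : G₀)⁻¹) = 1 := by
        have h1 : δ (p : G₀) = δ (q : G₀) := congrArg Subtype.val hpq
        rw [map_mul, map_inv, h1, mul_inv_cancel]
      have := hinj _ (mul_mem p.2 (inv_mem q.2)) this
      have := mul_inv_eq_one.mp this
      exact Subtype.ext this
    · rintro ⟨u, p, hp, rfl⟩
      exact ⟨⟨p, hp⟩, rfl⟩
  set e : P ≃* U := MulEquiv.ofBijective f hfbij with he
  have heco : Continuous e := hfc
  have hhomeo : Continuous (e.symm : U → P) :=
    (Continuous.homeoOfEquivCompactToT2 (f := e.toEquiv) heco).symm.continuous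
  set ρ' : U →* G₀ := P.subtype.comp e.symm.toMonoidHom with hρ'
  have hδρ' : ∀ u : U, δ (ρ' u) = (u : G₁) := by
    intro u
    have : δ ((e.symm u : P) : G₀) = ((f (e.symm u) : U) : G₁) := rfl
    rw [hρ']
    simp only [MonoidHom.comp_apply, Subgroup.coe_subtype, MulEquiv.coe_toMonoidHom]
    rw [this]
    have : f (e.symm u) = e (e.symm u) := rfl
    rw [this, MulEquiv.apply_symm_apply]
  refine ⟨U, hUopen, hHU, ρ', continuous_subtype_val.comp hhomeo, hδρ', ?_⟩
  intro x hx
  have hpx : ρ ⟨x, hx⟩ ∈ P := hRP ⟨⟨x, hx⟩, rfl⟩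
  have key : e ⟨ρ ⟨x, hx⟩, hpx⟩ = ⟨x, hHU hx⟩ := Subtype.ext (hρδ ⟨x, hx⟩)
  have : e.symm ⟨x, hHU hx⟩ = ⟨ρ ⟨x, hx⟩, hpx⟩ := by
    rw [← key, MulEquiv.symm_apply_apply]
  simp only [hρ', MonoidHom.comp_apply, MulEquiv.coe_toMonoidHom, this, Subgroup.coe_subtype]
end

section
/- Let M be a finitely generated free Z-module with an endomorphism F of M ⊗ Z_p such that M ⊗ Z_p = M⁰ ⊕ M¹ ⊕ M² with F·x = q^s·x-type behavior, namely F(M^s) = q^s·M^s for s = 0,1,2, where q = p^a with a ≥ 1, and each M^s is a free Z_p-module. Suppose also F is semisimple on M ⊗ C with all eigenvalues of complex absolute value q (via a fixed embedding Z_p → C). Then M⁰ ⊗ C is the sum of eigenspaces of F for eigenvalues that are p-adic units, and complex conjugation on M ⊗ C maps M⁰ ⊗ C into M² ⊗ C. -/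
open Module

section aux
variable {p : ℕ} [Fact p.Prime]

lemma aux_iota_ne_zero (ι : ℤ_[p] →+* ℂ) {z : ℤ_[p]} (hz : z ≠ 0) : ι z ≠ 0 := by
  rw [PadicInt.unitCoeff_spec hz, map_mul, map_pow]
  refine mul_ne_zero ?_ (pow_ne_zero _ ?_)
  · exact ((PadicInt.unitCoeff hz).isUnit.map ι).ne_zero
  · rw [map_natCast]
    exact_mod_cast (Fact.out : p.Prime).ne_zero

lemma aux_unit_of_toZMod {z : ℤ_[p]} (h : PadicInt.toZMod z ≠ 0) : IsUnit z := by
  by_contra hz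
  apply h
  have h1 : z ∈ IsLocalRing.maximalIdeal ℤ_[p] :=
    (IsLocalRing.mem_maximalIdeal z).mpr (mem_nonunits_iff.mpr hz)
  rw [← PadicInt.ker_toZMod] at h1
  exact RingHom.mem_ker.mp h1

lemma aux_smul_cancel {R N : Type*} [CommRing R] [IsDomain R] [AddCommGroup N] [Module R N]
    [Module.Free R N] {c : R} {x : N} (h : c • x = 0) (hx : x ≠ 0) : c = 0 := by
  by_contra hc
  apply hx
  let b := Module.Free.chooseBasis R N
  apply b.repr.injective
  rw [map_zero]
  ext i
  have h2 : c • b.repr x = 0 := by rw [← map_smul, h, map_zero]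
  have h3 : c * b.repr x i = 0 := by
    have := congrArg (fun f => f i) h2; simpa using this
  simpa using (mul_eq_zero.mp h3).resolve_left hc

lemma aux_map_sub_smul_one {κ : Type*} [Fintype κ] [DecidableEq κ] {R S : Type*} [CommRing R]
    [CommRing S] (f : R →+* S) (A : Matrix κ κ R) (w : R) :
    (A - w • 1).map f = A.map f - (f w) • 1 := by
  ext i k
  by_cases h : i = k <;>
    simp [Matrix.map_apply, Matrix.sub_apply, Matrix.smul_apply, Matrix.one_apply, h]

lemma aux_det_ne {κ : Type*} [Fintype κ] [DecidableEq κ] (X : Matrix κ κ ℤ_[p])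
    (h : ((X.map (PadicInt.toZMod)).det) ≠ 0) : X.det ≠ 0 := by
  intro h0
  apply h
  rw [← RingHom.mapMatrix_apply, ← RingHom.map_det, h0, map_zero]

lemma aux_det_unit {κ : Type*} [Fintype κ] [DecidableEq κ] (A : Matrix κ κ ℤ_[p])
    (hA : ∀ i k, PadicInt.toZMod (A i k) = 0) {w : ℤ_[p]} (hw : IsUnit w) :
    (A - w • 1).det ≠ 0 := by
  apply aux_det_ne
  rw [aux_map_sub_smul_one]
  have : A.map (PadicInt.toZMod) = 0 := by ext i k; simp [Matrix.map_apply, hA]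
  rw [this, zero_sub, ← neg_smul, Matrix.det_smul, Matrix.det_one, mul_one]
  exact pow_ne_zero _ (neg_ne_zero.mpr ((hw.map PadicInt.toZMod).ne_zero))

lemma aux_excl (ι : ℤ_[p] →+* ℂ) {V : Type*} [AddCommGroup V] [Module ℂ V]
    (F : V →ₗ[ℂ] V) {κ : Type*} [Fintype κ] [DecidableEq κ] {v : κ → V}
    (hv : LinearIndependent ℂ v) (A : Matrix κ κ ℤ_[p])
    (hA : ∀ k, F (v k) = ∑ i, ι (A i k) • v i) (w : ℤ_[p])
    (hdet : (A - w • 1).det ≠ 0) {x : V} (hx : x ∈ Submodule.span ℂ (Set.range v))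
    (hFx : F x = ι w • x) : x = 0 := by
  obtain ⟨c, rfl⟩ := (Submodule.mem_span_range_iff_exists_fun ℂ).mp hx
  rcases eq_or_ne c 0 with rfl | hc
  · simp
  exfalso
  have h1 : F (∑ k, c k • v k) = ∑ i, (∑ k, ι (A i k) * c k) • v i := by
    rw [map_sum]
    simp_rw [map_smul, hA, Finset.smul_sum, smul_smul]
    rw [Finset.sum_comm]
    refine Finset.sum_congr rfl fun i _ => ?_
    rw [Finset.sum_smul]
    exact Finset.sum_congr rfl fun k _ => by rw [mul_comm]
  have h2 : F (∑ k, c k • v k) = ∑ i, (ι w * c i) • v i := by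
    rw [hFx, Finset.smul_sum]; simp_rw [smul_smul]
  have h3 : ∀ i, ∑ k, ι (A i k) * c k = ι w * c i := by
    intro i
    have h4 := linearIndependent_iff'.mp hv Finset.univ
      (fun i => (∑ k, ι (A i k) * c k) - ι w * c i) ?_ i (Finset.mem_univ i)
    · exact sub_eq_zero.mp h4
    · simp_rw [sub_smul]
      rw [Finset.sum_sub_distrib, ← h1, ← h2, sub_self]
  have h5 : ((A.map ι) - (ι w) • 1).mulVec c = 0 := by
    ext i
    rw [Matrix.sub_mulVec]
    simp only [Pi.sub_apply, Pi.zero_apply, Matrix.smul_mulVec, Matrix.one_mulVec,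
      Pi.smul_apply, smul_eq_mul]
    rw [sub_eq_zero]
    simpa [Matrix.mulVec, dotProduct, Matrix.map_apply] using h3 i
  have h6 : ((A.map ι) - (ι w) • 1).det = 0 :=
    Matrix.exists_mulVec_eq_zero_iff.mp ⟨c, hc, h5⟩
  rw [← aux_map_sub_smul_one ι A w] at h6
  rw [← RingHom.mapMatrix_apply, ← RingHom.map_det] at h6
  exact aux_iota_ne_zero ι hdet h6

end aux

set_option maxHeartbeats 8000000 in
set_option synthInstance.maxHeartbeats 400000 in
open TensorProduct in
/-- cf. Lemma 3.3 and (M4). Let `M` be a finitely generated free `ℤ`-module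
with an endomorphism `FZ` (inducing `Fp` on `M ⊗ ℤ_[p]` and, via a fixed embedding
`ι : ℤ_[p] → ℂ`, `FC` on `M ⊗ ℂ`), such that `M ⊗ ℤ_[p] = M⁰ ⊕ M¹ ⊕ M²` with
`Fp(M^s) = q^s · M^s` for `s = 0, 1, 2`, where `q = p^a`, `a ≥ 1`, each `M^s` free over
`ℤ_[p]` (and `M⁰` of rank 1, as in (M4)).  Suppose `FC` is semisimple with all eigenvalues of
complex absolute value `q`.  Then `M⁰ ⊗ ℂ` is the sum of the eigenspaces of `FC` for
eigenvalues that are (images of) `p`-adic units, and complex conjugation on `M ⊗ ℂ` maps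
`M⁰ ⊗ ℂ` into `M² ⊗ ℂ`. -/
theorem stmt_5 (p a : ℕ) [Fact p.Prime] (ha : 1 ≤ a)
    (M : Type*) [AddCommGroup M] [Module.Free ℤ M] [Module.Finite ℤ M]
    (ι : ℤ_[p] →+* ℂ)
    (FZ : M →ₗ[ℤ] M)
    (Fp : ℤ_[p] ⊗[ℤ] M →ₗ[ℤ_[p]] ℤ_[p] ⊗[ℤ] M)
    (hFp : ∀ m : M, Fp ((1 : ℤ_[p]) ⊗ₜ[ℤ] m) = (1 : ℤ_[p]) ⊗ₜ[ℤ] FZ m)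
    (FC : ℂ ⊗[ℤ] M →ₗ[ℂ] ℂ ⊗[ℤ] M)
    (hFC : ∀ m : M, FC ((1 : ℂ) ⊗ₜ[ℤ] m) = (1 : ℂ) ⊗ₜ[ℤ] FZ m)
    (j : ℤ_[p] ⊗[ℤ] M →ₗ[ℤ] ℂ ⊗[ℤ] M)
    (hj : ∀ (c : ℤ_[p]) (m : M), j (c ⊗ₜ[ℤ] m) = (ι c) ⊗ₜ[ℤ] m)
    (conj : ℂ ⊗[ℤ] M →ₗ[ℤ] ℂ ⊗[ℤ] M)
    (hconj : ∀ (c : ℂ) (m : M), conj (c ⊗ₜ[ℤ] m) = (starRingEnd ℂ c) ⊗ₜ[ℤ] m)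
    (M0 M1 M2 : Submodule ℤ_[p] (ℤ_[p] ⊗[ℤ] M))
    [Module.Free ℤ_[p] ↥M0] [Module.Free ℤ_[p] ↥M1] [Module.Free ℤ_[p] ↥M2]
    (hr0 : Module.finrank ℤ_[p] ↥M0 = 1)
    (hsup : M0 ⊔ M1 ⊔ M2 = ⊤)
    (hind0 : M0 ⊓ (M1 ⊔ M2) = ⊥) (hind1 : M1 ⊓ (M0 ⊔ M2) = ⊥) (hind2 : M2 ⊓ (M0 ⊔ M1) = ⊥)
    (hF0 : Submodule.map Fp M0 = Submodule.map
      (((p : ℤ_[p]) ^ (a * 0)) • (LinearMap.id : ℤ_[p] ⊗[ℤ] M →ₗ[ℤ_[p]] ℤ_[p] ⊗[ℤ] M)) M0)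
    (hF1 : Submodule.map Fp M1 = Submodule.map
      (((p : ℤ_[p]) ^ (a * 1)) • (LinearMap.id : ℤ_[p] ⊗[ℤ] M →ₗ[ℤ_[p]] ℤ_[p] ⊗[ℤ] M)) M1)
    (hF2 : Submodule.map Fp M2 = Submodule.map
      (((p : ℤ_[p]) ^ (a * 2)) • (LinearMap.id : ℤ_[p] ⊗[ℤ] M →ₗ[ℤ_[p]] ℤ_[p] ⊗[ℤ] M)) M2)
    (hss : Module.End.IsSemisimple FC)
    (habs : ∀ u : ℂ, Module.End.HasEigenvalue FC u → ‖u‖ = (p : ℝ) ^ a) :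
    Submodule.span ℂ (⇑j '' (M0 : Set (ℤ_[p] ⊗[ℤ] M))) =
      (⨆ (w : ℤ_[p]) (_ : IsUnit w), Module.End.eigenspace FC (ι w)) ∧
    ∀ x ∈ Submodule.span ℂ (⇑j '' (M0 : Set (ℤ_[p] ⊗[ℤ] M))),
      conj x ∈ Submodule.span ℂ (⇑j '' (M2 : Set (ℤ_[p] ⊗[ℤ] M))) := by
  classical
  haveI : Module.Finite ℤ_[p] (ℤ_[p] ⊗[ℤ] M) := Module.Finite.base_change ℤ ℤ_[p] M
  haveI : Module.Finite ℂ (ℂ ⊗[ℤ] M) := Module.Finite.base_change ℤ ℂ M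
  haveI : Module.Finite ℤ_[p] ↥M0 := inferInstance
  haveI : Module.Finite ℤ_[p] ↥M1 := inferInstance
  haveI : Module.Finite ℤ_[p] ↥M2 := inferInstance
  have hp1 : (p : ℤ_[p]) ≠ 0 := Nat.cast_ne_zero.mpr (Fact.out : p.Prime).ne_zero
  -- semilinearity of j and conj
  have hjs : ∀ (c : ℤ_[p]) (x : ℤ_[p] ⊗[ℤ] M), j (c • x) = ι c • j x := by
    intro c x
    induction x using TensorProduct.induction_on with
    | zero => simp
    | tmul d m =>
      rw [TensorProduct.smul_tmul', smul_eq_mul, hj, hj, map_mul,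
        TensorProduct.smul_tmul', smul_eq_mul]
    | add x y hx hy => rw [smul_add, map_add, hx, hy, map_add, smul_add]
  have hconjs : ∀ (z : ℂ) (x : ℂ ⊗[ℤ] M), conj (z • x) = (starRingEnd ℂ z) • conj x := by
    intro z x
    induction x using TensorProduct.induction_on with
    | zero => simp
    | tmul d m =>
      rw [TensorProduct.smul_tmul', smul_eq_mul, hconj, hconj, map_mul,
        TensorProduct.smul_tmul', smul_eq_mul]
    | add x y hx hy => rw [smul_add, map_add, hx, hy, map_add, smul_add]
  have hjF : ∀ x, j (Fp x) = FC (j x) := by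
    intro x
    induction x using TensorProduct.induction_on with
    | zero => simp
    | tmul c m =>
      have h1 : c ⊗ₜ[ℤ] m = c • ((1 : ℤ_[p]) ⊗ₜ[ℤ] m) := by
        rw [TensorProduct.smul_tmul', smul_eq_mul, mul_one]
      rw [h1]
      simp only [map_smul, hjs, hFp, hj, map_one, hFC]
    | add x y hx hy => simp only [map_add, hx, hy]
  have hconjF : ∀ x, conj (FC x) = FC (conj x) := by
    intro x
    induction x using TensorProduct.induction_on with
    | zero => simp
    | tmul c m =>
      have h1 : c ⊗ₜ[ℤ] m = c • ((1 : ℂ) ⊗ₜ[ℤ] m) := by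
        rw [TensorProduct.smul_tmul', smul_eq_mul, mul_one]
      rw [h1]
      simp only [map_smul, hconjs, hFC, hconj, map_one]
    | add x y hx hy => simp only [map_add, hx, hy]
  -- span lemma
  have hspan : ∀ (S : Set (ℤ_[p] ⊗[ℤ] M)) (P : Submodule ℤ_[p] (ℤ_[p] ⊗[ℤ] M)),
      P = Submodule.span ℤ_[p] S →
      Submodule.span ℂ (⇑j '' (P : Set (ℤ_[p] ⊗[ℤ] M))) = Submodule.span ℂ (⇑j '' S) := by
    intro S P hP
    apply le_antisymm
    · rw [Submodule.span_le]
      rintro _ ⟨y, hy, rfl⟩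
      rw [hP, SetLike.mem_coe] at hy
      induction hy using Submodule.span_induction with
      | mem z hz => exact Submodule.subset_span ⟨z, hz, rfl⟩
      | zero => simp
      | add y z _ _ hy hz => rw [map_add]; exact Submodule.add_mem _ hy hz
      | smul c y _ hy => rw [hjs]; exact Submodule.smul_mem _ _ hy
    · refine Submodule.span_mono (Set.image_mono ?_)
      rw [hP]
      exact Submodule.subset_span
  -- invariance infrastructure
  have hFpMem : ∀ (P : Submodule ℤ_[p] (ℤ_[p] ⊗[ℤ] M)) (c : ℤ_[p]),
      Submodule.map Fp P = Submodule.map (c • (LinearMap.id : ℤ_[p] ⊗[ℤ] M →ₗ[ℤ_[p]] ℤ_[p] ⊗[ℤ] M)) P →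
      ∀ x ∈ P, Fp x ∈ P := by
    intro P c hP x hx
    have h1 : Fp x ∈ Submodule.map Fp P := Submodule.mem_map_of_mem hx
    rw [hP] at h1
    obtain ⟨y, hy, hyx⟩ := h1
    rw [← hyx]
    simpa using Submodule.smul_mem P c hy
  have hFpM0 : ∀ x ∈ M0, Fp x ∈ M0 := hFpMem M0 _ hF0
  have hFpM1 : ∀ x ∈ M1, Fp x ∈ M1 := hFpMem M1 _ hF1
  have hFpM2 : ∀ x ∈ M2, Fp x ∈ M2 := hFpMem M2 _ hF2
  have hNinv : ∀ (P : Submodule ℤ_[p] (ℤ_[p] ⊗[ℤ] M)), (∀ y ∈ P, Fp y ∈ P) →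
      ∀ x ∈ Submodule.span ℂ (⇑j '' (P : Set (ℤ_[p] ⊗[ℤ] M))),
        FC x ∈ Submodule.span ℂ (⇑j '' (P : Set (ℤ_[p] ⊗[ℤ] M))) := by
    intro P hP x hx
    induction hx using Submodule.span_induction with
    | mem z hz =>
      obtain ⟨y, hy, rfl⟩ := hz
      rw [← hjF]
      exact Submodule.subset_span ⟨Fp y, hP y hy, rfl⟩
    | zero => simp
    | add y z _ _ hy hz => rw [map_add]; exact Submodule.add_mem _ hy hz
    | smul c y _ hy => rw [map_smul]; exact Submodule.smul_mem _ _ hy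
  -- bases of the pieces
  let b0 := Module.Free.chooseBasis ℤ_[p] ↥M0
  let b1 := Module.Free.chooseBasis ℤ_[p] ↥M1
  let b2 := Module.Free.chooseBasis ℤ_[p] ↥M2
  have hM0span : M0 = Submodule.span ℤ_[p]
      (Set.range (fun k => ((b0 k : ↥M0) : ℤ_[p] ⊗[ℤ] M))) := by
    conv_lhs => rw [← Submodule.map_subtype_top M0]
    rw [← b0.span_eq, Submodule.map_span, ← Set.range_comp]
    rfl
  have hM1span : M1 = Submodule.span ℤ_[p]
      (Set.range (fun k => ((b1 k : ↥M1) : ℤ_[p] ⊗[ℤ] M))) := by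
    conv_lhs => rw [← Submodule.map_subtype_top M1]
    rw [← b1.span_eq, Submodule.map_span, ← Set.range_comp]
    rfl
  have hM2span : M2 = Submodule.span ℤ_[p]
      (Set.range (fun k => ((b2 k : ↥M2) : ℤ_[p] ⊗[ℤ] M))) := by
    conv_lhs => rw [← Submodule.map_subtype_top M2]
    rw [← b2.span_eq, Submodule.map_span, ← Set.range_comp]
    rfl
  set N0 := Submodule.span ℂ (⇑j '' (M0 : Set (ℤ_[p] ⊗[ℤ] M))) with hN0def
  set N1 := Submodule.span ℂ (⇑j '' (M1 : Set (ℤ_[p] ⊗[ℤ] M))) with hN1def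
  set N2 := Submodule.span ℂ (⇑j '' (M2 : Set (ℤ_[p] ⊗[ℤ] M))) with hN2def
  let v0 : _ → ℂ ⊗[ℤ] M := fun k => j ((b0 k : ↥M0) : ℤ_[p] ⊗[ℤ] M)
  let v1 : _ → ℂ ⊗[ℤ] M := fun k => j ((b1 k : ↥M1) : ℤ_[p] ⊗[ℤ] M)
  let v2 : _ → ℂ ⊗[ℤ] M := fun k => j ((b2 k : ↥M2) : ℤ_[p] ⊗[ℤ] M)
  have hN0v : N0 = Submodule.span ℂ (Set.range v0) := by
    rw [hN0def, hspan _ _ hM0span, ← Set.range_comp]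
    rfl
  have hN1v : N1 = Submodule.span ℂ (Set.range v1) := by
    rw [hN1def, hspan _ _ hM1span, ← Set.range_comp]
    rfl
  have hN2v : N2 = Submodule.span ℂ (Set.range v2) := by
    rw [hN2def, hspan _ _ hM2span, ← Set.range_comp]
    rfl
  -- the complex spans fill everything
  have hsupC : N0 ⊔ N1 ⊔ N2 = ⊤ := by
    rw [eq_top_iff]
    intro x _
    induction x using TensorProduct.induction_on with
    | zero => exact Submodule.zero_mem _
    | add x y hx hy => exact Submodule.add_mem _ (hx Submodule.mem_top) (hy Submodule.mem_top)
    | tmul c m =>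
      have h1 : ((1 : ℤ_[p]) ⊗ₜ[ℤ] m) ∈ M0 ⊔ M1 ⊔ M2 := hsup ▸ Submodule.mem_top
      obtain ⟨y01, hy01, z2, hz2, hsum2⟩ := Submodule.mem_sup.mp h1
      obtain ⟨z0, hz0, z1, hz1, hsum0⟩ := Submodule.mem_sup.mp hy01
      have h2 : j z0 + j z1 + j z2 = (1 : ℂ) ⊗ₜ[ℤ] m := by
        rw [← map_add, ← map_add, hsum0, hsum2, hj, map_one]
      have h3 : c ⊗ₜ[ℤ] m = c • (j z0 + j z1 + j z2) := by
        rw [h2, TensorProduct.smul_tmul', smul_eq_mul, mul_one]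
      rw [h3]
      refine Submodule.smul_mem _ _ ?_
      refine Submodule.add_mem _ (Submodule.add_mem _ ?_ ?_) ?_
      · exact Submodule.mem_sup_left (Submodule.mem_sup_left
          (Submodule.subset_span ⟨z0, hz0, rfl⟩))
      · exact Submodule.mem_sup_left (Submodule.mem_sup_right
          (Submodule.subset_span ⟨z1, hz1, rfl⟩))
      · exact Submodule.mem_sup_right (Submodule.subset_span ⟨z2, hz2, rfl⟩)
  -- rank bookkeeping
  haveI : FiniteDimensional ℂ (ℂ ⊗[ℤ] M) := ‹Module.Finite ℂ (ℂ ⊗[ℤ] M)›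
  have hTn : finrank ℤ_[p] (ℤ_[p] ⊗[ℤ] M) = finrank ℂ (ℂ ⊗[ℤ] M) := by
    rw [Module.finrank_baseChange, Module.finrank_baseChange]
  let Φ : (↥M0 × ↥M1 × ↥M2) →ₗ[ℤ_[p]] ℤ_[p] ⊗[ℤ] M :=
    M0.subtype.coprod ((M1.subtype).coprod (M2.subtype))
  have hΦinj : Function.Injective Φ := by
    rw [← LinearMap.ker_eq_bot, LinearMap.ker_eq_bot']
    rintro ⟨x0, x1, x2⟩ hz
    have hz' : (x0 : ℤ_[p] ⊗[ℤ] M) + ((x1 : ℤ_[p] ⊗[ℤ] M) + (x2 : ℤ_[p] ⊗[ℤ] M)) = 0 := hz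
    have h0 : (x0 : ℤ_[p] ⊗[ℤ] M) ∈ M0 ⊓ (M1 ⊔ M2) := by
      refine ⟨x0.2, ?_⟩
      have h : (x0 : ℤ_[p] ⊗[ℤ] M) = -((x1 : ℤ_[p] ⊗[ℤ] M) + (x2 : ℤ_[p] ⊗[ℤ] M)) :=
        eq_neg_of_add_eq_zero_left hz'
      rw [h]
      exact Submodule.neg_mem _ (Submodule.add_mem _ (Submodule.mem_sup_left x1.2)
        (Submodule.mem_sup_right x2.2))
    rw [hind0] at h0
    have hx0 : (x0 : ℤ_[p] ⊗[ℤ] M) = 0 := Submodule.mem_bot _ |>.mp h0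
    have hz'' : (x1 : ℤ_[p] ⊗[ℤ] M) + (x2 : ℤ_[p] ⊗[ℤ] M) = 0 := by
      rw [hx0, zero_add] at hz'; exact hz'
    have h1 : (x1 : ℤ_[p] ⊗[ℤ] M) ∈ M1 ⊓ (M0 ⊔ M2) := by
      refine ⟨x1.2, ?_⟩
      have h : (x1 : ℤ_[p] ⊗[ℤ] M) = -(x2 : ℤ_[p] ⊗[ℤ] M) := eq_neg_of_add_eq_zero_left hz''
      rw [h]
      exact Submodule.neg_mem _ (Submodule.mem_sup_right x2.2)
    rw [hind1] at h1
    have hx1 : (x1 : ℤ_[p] ⊗[ℤ] M) = 0 := Submodule.mem_bot _ |>.mp h1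
    have hx2 : (x2 : ℤ_[p] ⊗[ℤ] M) = 0 := by rw [hx1, zero_add] at hz''; exact hz''
    refine Prod.ext (Subtype.ext hx0) (Prod.ext (Subtype.ext hx1) (Subtype.ext hx2))
  have hΦrank := LinearMap.finrank_le_finrank_of_injective hΦinj
  rw [Module.finrank_prod, Module.finrank_prod] at hΦrank
  have hf0le : finrank ℂ ↥N0 ≤ finrank ℤ_[p] ↥M0 := by
    rw [hN0v, Module.finrank_eq_card_chooseBasisIndex ℤ_[p] ↥M0]
    refine (finrank_span_le_card _).trans ?_
    rw [Set.toFinset_range]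
    exact (Finset.card_image_le).trans (le_of_eq Finset.card_univ)
  have hf1le : finrank ℂ ↥N1 ≤ finrank ℤ_[p] ↥M1 := by
    rw [hN1v, Module.finrank_eq_card_chooseBasisIndex ℤ_[p] ↥M1]
    refine (finrank_span_le_card _).trans ?_
    rw [Set.toFinset_range]
    exact (Finset.card_image_le).trans (le_of_eq Finset.card_univ)
  have hf2le : finrank ℂ ↥N2 ≤ finrank ℤ_[p] ↥M2 := by
    rw [hN2v, Module.finrank_eq_card_chooseBasisIndex ℤ_[p] ↥M2]
    refine (finrank_span_le_card _).trans ?_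
    rw [Set.toFinset_range]
    exact (Finset.card_image_le).trans (le_of_eq Finset.card_univ)
  have hsup' : N0 ⊔ (N1 ⊔ N2) = ⊤ := by rw [← sup_assoc, hsupC]
  have e1 := Submodule.finrank_sup_add_finrank_inf_eq N0 (N1 ⊔ N2)
  have e2 := Submodule.finrank_sup_add_finrank_inf_eq N1 N2
  rw [hsup', finrank_top] at e1
  have key : finrank ℂ ↥(N0 ⊓ (N1 ⊔ N2)) = 0 ∧ finrank ℂ ↥(N1 ⊓ N2) = 0 ∧
      finrank ℂ ↥N0 = 1 ∧ finrank ℂ ↥N1 = finrank ℤ_[p] ↥M1 ∧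
      finrank ℂ ↥N2 = finrank ℤ_[p] ↥M2 := by
    have h1 : finrank ℂ ↥(N1 ⊔ N2) ≤ finrank ℂ ↥N1 + finrank ℂ ↥N2 := by omega
    omega
  have hind0C : N0 ⊓ (N1 ⊔ N2) = ⊥ := Submodule.finrank_eq_zero.mp key.1
  have hind12C : N1 ⊓ N2 = ⊥ := Submodule.finrank_eq_zero.mp key.2.1
  have hf0 : finrank ℂ ↥N0 = 1 := key.2.2.1
  have hf1 : finrank ℂ ↥N1 = finrank ℤ_[p] ↥M1 := key.2.2.2.1
  have hf2 : finrank ℂ ↥N2 = finrank ℤ_[p] ↥M2 := key.2.2.2.2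
  -- uniqueness of decompositions
  have huniq : ∀ y0 ∈ N0, ∀ y1 ∈ N1, ∀ y2 ∈ N2, y0 + y1 + y2 = 0 →
      y0 = 0 ∧ y1 = 0 ∧ y2 = 0 := by
    intro y0 h0 y1 h1 y2 h2 hsum'
    have hz' : y0 + (y1 + y2) = 0 := by rw [← add_assoc]; exact hsum'
    have k0 : y0 ∈ N0 ⊓ (N1 ⊔ N2) := by
      refine ⟨h0, ?_⟩
      rw [eq_neg_of_add_eq_zero_left hz']
      exact Submodule.neg_mem _ (Submodule.add_mem _ (Submodule.mem_sup_left h1)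
        (Submodule.mem_sup_right h2))
    rw [hind0C] at k0
    have hy0 : y0 = 0 := Submodule.mem_bot _ |>.mp k0
    have hz'' : y1 + y2 = 0 := by rw [hy0, zero_add] at hz'; exact hz'
    have k1 : y1 ∈ N1 ⊓ N2 := by
      refine ⟨h1, ?_⟩
      rw [eq_neg_of_add_eq_zero_left hz'']
      exact Submodule.neg_mem _ h2
    rw [hind12C] at k1
    have hy1 : y1 = 0 := Submodule.mem_bot _ |>.mp k1
    have hy2 : y2 = 0 := by rw [hy1, zero_add] at hz''; exact hz''
    exact ⟨hy0, hy1, hy2⟩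
  -- eigenvector decomposition
  have hcomp : ∀ (lam : ℂ) (x : ℂ ⊗[ℤ] M), FC x = lam • x →
      ∃ x0 x1 x2, x0 ∈ N0 ∧ x1 ∈ N1 ∧ x2 ∈ N2 ∧ x = x0 + x1 + x2 ∧
        FC x0 = lam • x0 ∧ FC x1 = lam • x1 ∧ FC x2 = lam • x2 := by
    intro lam x hx
    have hxT : x ∈ N0 ⊔ N1 ⊔ N2 := by rw [hsupC]; exact Submodule.mem_top
    obtain ⟨y01, hy01, x2, h2, hs2⟩ := Submodule.mem_sup.mp hxT
    obtain ⟨x0, h0, x1, h1, hs0⟩ := Submodule.mem_sup.mp hy01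
    have hxeq : x = x0 + x1 + x2 := by rw [← hs2, ← hs0]
    refine ⟨x0, x1, x2, h0, h1, h2, hxeq, ?_⟩
    have k0 : FC x0 - lam • x0 ∈ N0 :=
      Submodule.sub_mem _ (hNinv M0 hFpM0 x0 h0) (Submodule.smul_mem _ _ h0)
    have k1 : FC x1 - lam • x1 ∈ N1 :=
      Submodule.sub_mem _ (hNinv M1 hFpM1 x1 h1) (Submodule.smul_mem _ _ h1)
    have k2 : FC x2 - lam • x2 ∈ N2 :=
      Submodule.sub_mem _ (hNinv M2 hFpM2 x2 h2) (Submodule.smul_mem _ _ h2)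
    have hsum' : (FC x0 - lam • x0) + (FC x1 - lam • x1) + (FC x2 - lam • x2) = 0 := by
      have h := hx
      rw [hxeq, map_add, map_add, smul_add, smul_add] at h
      rw [sub_add_sub_comm, sub_add_sub_comm, h, sub_self]
    obtain ⟨z0, z1, z2⟩ := huniq _ k0 _ k1 _ k2 hsum'
    exact ⟨sub_eq_zero.mp z0, sub_eq_zero.mp z1, sub_eq_zero.mp z2⟩
  -- structure of M0
  have hcard0 : Fintype.card (Module.Free.ChooseBasisIndex ℤ_[p] ↥M0) = 1 := by
    rw [← Module.finrank_eq_card_chooseBasisIndex]; exact hr0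
  obtain ⟨k0, hk0⟩ := Fintype.card_eq_one_iff.mp hcard0
  set e' : ℤ_[p] ⊗[ℤ] M := ((b0 k0 : ↥M0) : ℤ_[p] ⊗[ℤ] M) with he'def
  have hrange0 : Set.range (fun k => ((b0 k : ↥M0) : ℤ_[p] ⊗[ℤ] M)) = {e'} := by
    apply Set.eq_singleton_iff_unique_mem.mpr
    refine ⟨⟨k0, rfl⟩, ?_⟩
    rintro _ ⟨k, rfl⟩
    rw [hk0 k]
  have hM0sing : M0 = Submodule.span ℤ_[p] {e'} := by rw [hM0span, hrange0]
  have he'M0 : e' ∈ M0 := (b0 k0).2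
  have he'ne : e' ≠ 0 := by
    simp only [he'def, ne_eq, ZeroMemClass.coe_eq_zero]
    exact b0.ne_zero k0
  set je' : ℂ ⊗[ℤ] M := j e' with hje'def
  have hN0sing : N0 = Submodule.span ℂ {je'} := by
    rw [hN0def, hspan _ _ hM0sing, Set.image_singleton]
  -- the eigenvalue u on N0
  have hFpe' : Fp e' ∈ M0 := hFpM0 e' he'M0
  obtain ⟨u, hue⟩ := Submodule.mem_span_singleton.mp (hM0sing ▸ hFpe')
  have he'mem : e' ∈ Submodule.map Fp M0 := by
    rw [hF0]
    refine ⟨e', he'M0, ?_⟩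
    simp
  obtain ⟨z, hzM0, hze⟩ := he'mem
  obtain ⟨c, hcz⟩ := Submodule.mem_span_singleton.mp (hM0sing ▸ hzM0)
  have hcu : (c * u) • e' = e' := by
    calc (c * u) • e' = c • (u • e') := mul_smul c u e'
    _ = c • Fp e' := by rw [hue]
    _ = Fp (c • e') := (map_smul Fp c e').symm
    _ = Fp z := by rw [hcz]
    _ = e' := hze
  have hu : IsUnit u := by
    have h1 : (c * u - 1) • e' = 0 := by rw [sub_smul, one_smul, hcu, sub_self]
    have h2 : c * u = 1 :=
      sub_eq_zero.mp (aux_smul_cancel (R := ℤ_[p]) (N := ℤ_[p] ⊗[ℤ] M) h1 he'ne)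
    exact IsUnit.of_mul_eq_one (a := u) c (by rw [mul_comm]; exact h2)
  have hFCje' : FC je' = ι u • je' := by
    rw [hje'def, ← hjF, ← hue, hjs]
  have hje'ne : je' ≠ 0 := by
    intro h
    rw [h, Submodule.span_zero_singleton] at hN0sing
    rw [hN0sing] at hf0
    rw [finrank_bot] at hf0
    exact zero_ne_one hf0
  -- matrices of Fp on M1 and M2
  let Fr1 : ↥M1 →ₗ[ℤ_[p]] ↥M1 := Fp.restrict hFpM1
  let Fr2 : ↥M2 →ₗ[ℤ_[p]] ↥M2 := Fp.restrict hFpM2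
  let A1 : Matrix _ _ ℤ_[p] := fun i k => b1.repr (Fr1 (b1 k)) i
  let A2 : Matrix _ _ ℤ_[p] := fun i k => b2.repr (Fr2 (b2 k)) i
  have hcoe1 : ∀ (y : ↥M1), ((y : ↥M1) : ℤ_[p] ⊗[ℤ] M)
      = ∑ i, (b1.repr y i) • ((b1 i : ↥M1) : ℤ_[p] ⊗[ℤ] M) := by
    intro y
    conv_lhs => rw [← Basis.sum_repr b1 y]
    push_cast
    rfl
  have hcoe2 : ∀ (y : ↥M2), ((y : ↥M2) : ℤ_[p] ⊗[ℤ] M)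
      = ∑ i, (b2.repr y i) • ((b2 i : ↥M2) : ℤ_[p] ⊗[ℤ] M) := by
    intro y
    conv_lhs => rw [← Basis.sum_repr b2 y]
    push_cast
    rfl
  have hA1 : ∀ k, FC (v1 k) = ∑ i, ι (A1 i k) • v1 i := by
    intro k
    have h1 : FC (v1 k) = j ((Fr1 (b1 k) : ↥M1) : ℤ_[p] ⊗[ℤ] M) := by rw [← hjF]; rfl
    rw [h1, hcoe1 (Fr1 (b1 k)), map_sum]
    exact Finset.sum_congr rfl fun i _ => by rw [hjs]
  have hA2 : ∀ k, FC (v2 k) = ∑ i, ι (A2 i k) • v2 i := by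
    intro k
    have h1 : FC (v2 k) = j ((Fr2 (b2 k) : ↥M2) : ℤ_[p] ⊗[ℤ] M) := by rw [← hjF]; rfl
    rw [h1, hcoe2 (Fr2 (b2 k)), map_sum]
    exact Finset.sum_congr rfl fun i _ => by rw [hjs]
  have hli1 : LinearIndependent ℂ v1 := by
    rw [linearIndependent_iff_card_eq_finrank_span]
    unfold Set.finrank
    rw [← hN1v, hf1, Module.finrank_eq_card_chooseBasisIndex]
  have hli2 : LinearIndependent ℂ v2 := by
    rw [linearIndependent_iff_card_eq_finrank_span]
    unfold Set.finrank
    rw [← hN2v, hf2, Module.finrank_eq_card_chooseBasisIndex]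
  have hexcl1 : ∀ (w : ℤ_[p]), (A1 - w • 1).det ≠ 0 → ∀ x ∈ N1, FC x = ι w • x → x = 0 := by
    intro w hdet x hx hFx
    exact aux_excl ι FC hli1 A1 hA1 w hdet (by rw [← hN1v]; exact hx) hFx
  have hexcl2 : ∀ (w : ℤ_[p]), (A2 - w • 1).det ≠ 0 → ∀ x ∈ N2, FC x = ι w • x → x = 0 := by
    intro w hdet x hx hFx
    exact aux_excl ι FC hli2 A2 hA2 w hdet (by rw [← hN2v]; exact hx) hFx
  -- entries of A1, A2 are divisible by p
  have hA1div : ∀ i k, PadicInt.toZMod (A1 i k) = 0 := by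
    intro i k
    have h1 : Fp ((b1 k : ↥M1) : ℤ_[p] ⊗[ℤ] M) ∈ Submodule.map
        (((p : ℤ_[p]) ^ (a * 1)) • (LinearMap.id : ℤ_[p] ⊗[ℤ] M →ₗ[ℤ_[p]] ℤ_[p] ⊗[ℤ] M)) M1 := by
      rw [← hF1]
      exact Submodule.mem_map_of_mem (b1 k).2
    obtain ⟨y, hy, hyy⟩ := h1
    have h2 : Fr1 (b1 k) = ((p : ℤ_[p]) ^ (a * 1)) • (⟨y, hy⟩ : ↥M1) := by
      apply Subtype.ext
      simp only [SetLike.val_smul]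
      have hcoeFr : ((Fr1 (b1 k) : ↥M1) : ℤ_[p] ⊗[ℤ] M) = Fp ((b1 k : ↥M1) : ℤ_[p] ⊗[ℤ] M) := rfl
      rw [hcoeFr, ← hyy]
      rfl
    show PadicInt.toZMod (b1.repr (Fr1 (b1 k)) i) = 0
    rw [h2, map_smul, Finsupp.smul_apply, smul_eq_mul, map_mul, map_pow, map_natCast,
      ZMod.natCast_self, zero_pow (by omega), zero_mul]
  have hA2div : ∀ i k, PadicInt.toZMod (A2 i k) = 0 := by
    intro i k
    have h1 : Fp ((b2 k : ↥M2) : ℤ_[p] ⊗[ℤ] M) ∈ Submodule.map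
        (((p : ℤ_[p]) ^ (a * 2)) • (LinearMap.id : ℤ_[p] ⊗[ℤ] M →ₗ[ℤ_[p]] ℤ_[p] ⊗[ℤ] M)) M2 := by
      rw [← hF2]
      exact Submodule.mem_map_of_mem (b2 k).2
    obtain ⟨y, hy, hyy⟩ := h1
    have h2 : Fr2 (b2 k) = ((p : ℤ_[p]) ^ (a * 2)) • (⟨y, hy⟩ : ↥M2) := by
      apply Subtype.ext
      simp only [SetLike.val_smul]
      have hcoeFr : ((Fr2 (b2 k) : ↥M2) : ℤ_[p] ⊗[ℤ] M) = Fp ((b2 k : ↥M2) : ℤ_[p] ⊗[ℤ] M) := rfl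
      rw [hcoeFr, ← hyy]
      rfl
    show PadicInt.toZMod (b2.repr (Fr2 (b2 k)) i) = 0
    rw [h2, map_smul, Finsupp.smul_apply, smul_eq_mul, map_mul, map_pow, map_natCast,
      ZMod.natCast_self, zero_pow (by omega), zero_mul]
  constructor
  · -- Part 1
    apply le_antisymm
    · rw [hN0sing, Submodule.span_singleton_le_iff_mem]
      have hmem : je' ∈ Module.End.eigenspace FC (ι u) :=
        Module.End.mem_eigenspace_iff.mpr hFCje'
      exact Submodule.mem_iSup_of_mem u (Submodule.mem_iSup_of_mem hu hmem)
    · refine iSup_le fun w => iSup_le fun hw => ?_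
      intro x hx
      have hFx : FC x = ι w • x := Module.End.mem_eigenspace_iff.mp hx
      obtain ⟨x0, x1, x2, h0, h1, h2, hxeq, e0, e1, e2⟩ := hcomp (ι w) x hFx
      have hx1 : x1 = 0 := hexcl1 w (aux_det_unit A1 hA1div hw) x1 h1 e1
      have hx2 : x2 = 0 := hexcl2 w (aux_det_unit A2 hA2div hw) x2 h2 e2
      rw [hxeq, hx1, hx2, add_zero, add_zero]
      exact h0
  · -- Part 2
    have hev : Module.End.HasEigenvalue FC (ι u) :=
      Module.End.hasEigenvalue_of_hasEigenvector
        ⟨Module.End.mem_eigenspace_iff.mpr hFCje', hje'ne⟩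
    have habs_u : ‖ι u‖ = (p : ℝ) ^ a := habs (ι u) hev
    have hιu_ne : ι u ≠ 0 := aux_iota_ne_zero ι hu.ne_zero
    set u' : ℤ_[p] := ((hu.unit⁻¹ : ℤ_[p]ˣ) : ℤ_[p]) with hu'def
    have huu' : u * u' = 1 := by
      rw [hu'def]
      nth_rewrite 1 [← hu.unit_spec]
      exact_mod_cast hu.unit.mul_inv
    set w' : ℤ_[p] := (p : ℤ_[p]) ^ (2 * a) * u' with hw'def
    have hconj_eq : (starRingEnd ℂ) (ι u) = ι w' := by
      have h1 : (starRingEnd ℂ) (ι u) * ι u = ((p : ℂ)) ^ (2 * a) := by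
        rw [mul_comm, Complex.mul_conj, Complex.normSq_eq_norm_sq, habs_u]
        push_cast
        ring
      have h2 : ι w' * ι u = ((p : ℂ)) ^ (2 * a) := by
        rw [← map_mul]
        have h3 : w' * u = (p : ℤ_[p]) ^ (2 * a) := by
          rw [hw'def, mul_assoc, mul_comm u' u, huu', mul_one]
        rw [h3, map_pow, map_natCast]
      exact mul_right_cancel₀ hιu_ne (h1.trans h2.symm)
    have hFCconj : FC (conj je') = ι w' • conj je' := by
      rw [← hconjF, hFCje', hconjs, hconj_eq]
    obtain ⟨x0, x1, x2, h0, h1, h2, hxeq, e0, e1, e2⟩ := hcomp (ι w') (conj je') hFCconj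
    have hπw' : PadicInt.toZMod w' = 0 := by
      rw [hw'def, map_mul, map_pow, map_natCast, ZMod.natCast_self, zero_pow (by omega),
        zero_mul]
    have hx0 : x0 = 0 := by
      obtain ⟨z, hz⟩ := Submodule.mem_span_singleton.mp (by rw [← hN0sing]; exact h0)
      have h5 : FC x0 = (z * ι u) • je' := by rw [← hz, map_smul, hFCje', smul_smul]
      have h6 : FC x0 = (ι w' * z) • je' := by rw [e0, ← hz, smul_smul]
      have h7 : (z * ι u - ι w' * z) • je' = 0 := by rw [sub_smul, ← h5, ← h6, sub_self]
      have h8 : z * (ι u - ι w') = 0 := by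
        have h := (smul_eq_zero.mp h7).resolve_right hje'ne
        linear_combination h
      have huw'unit : IsUnit (u - w') := by
        apply aux_unit_of_toZMod
        rw [map_sub, hπw', sub_zero]
        exact (hu.map PadicInt.toZMod).ne_zero
      have h9 : ι u - ι w' ≠ 0 := by
        rw [← map_sub]
        exact aux_iota_ne_zero ι huw'unit.ne_zero
      have hz0 : z = 0 := by
        rcases mul_eq_zero.mp h8 with h | h
        · exact h
        · exact absurd h h9
      rw [← hz, hz0, zero_smul]
    -- invertible part of the matrix on M1
    have hy1 : ∀ k, ∃ y : ↥M1, Fr1 (b1 k) = ((p : ℤ_[p]) ^ a) • y := by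
      intro k
      have h1' : Fp ((b1 k : ↥M1) : ℤ_[p] ⊗[ℤ] M) ∈ Submodule.map
          (((p : ℤ_[p]) ^ (a * 1)) • (LinearMap.id : ℤ_[p] ⊗[ℤ] M →ₗ[ℤ_[p]] ℤ_[p] ⊗[ℤ] M)) M1 := by
        rw [← hF1]
        exact Submodule.mem_map_of_mem (b1 k).2
      obtain ⟨y, hy, hyy⟩ := h1'
      refine ⟨⟨y, hy⟩, ?_⟩
      apply Subtype.ext
      simp only [SetLike.val_smul]
      have hcoeFr : ((Fr1 (b1 k) : ↥M1) : ℤ_[p] ⊗[ℤ] M)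
          = Fp ((b1 k : ↥M1) : ℤ_[p] ⊗[ℤ] M) := rfl
      rw [hcoeFr, ← hyy]
      simp [mul_one]
    choose Y hY using hy1
    let H : ↥M1 →ₗ[ℤ_[p]] ↥M1 := Basis.constr b1 ℤ_[p] Y
    have hFrH : ∀ z, Fr1 z = ((p : ℤ_[p]) ^ a) • H z := by
      intro z
      have h : Fr1 = ((p : ℤ_[p]) ^ a) • H := by
        apply b1.ext
        intro k
        rw [LinearMap.smul_apply, Basis.constr_basis]
        exact hY k
      rw [h]
      rfl
    have hq0 : ((p : ℤ_[p]) ^ a) ≠ 0 := pow_ne_zero _ hp1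
    have hHsurj : Function.Surjective H := by
      intro z
      have h1' : ((p : ℤ_[p]) ^ a) • (z : ℤ_[p] ⊗[ℤ] M) ∈ Submodule.map Fp M1 := by
        rw [hF1]
        refine ⟨(z : ℤ_[p] ⊗[ℤ] M), z.2, ?_⟩
        simp [mul_one]
      obtain ⟨t, ht, htt⟩ := h1'
      refine ⟨⟨t, ht⟩, ?_⟩
      have h2' : Fr1 ⟨t, ht⟩ = ((p : ℤ_[p]) ^ a) • z := by
        apply Subtype.ext
        simp only [SetLike.val_smul]
        exact htt
      rw [hFrH] at h2'
      have h3' : ((p : ℤ_[p]) ^ a) • (H ⟨t, ht⟩ - z) = 0 := by rw [smul_sub, h2', sub_self]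
      have h4' : H ⟨t, ht⟩ - z = 0 := by
        by_contra hne
        exact hq0 (aux_smul_cancel h3' hne)
      exact sub_eq_zero.mp h4'
    have hHinj : Function.Injective H :=
      OrzechProperty.injective_of_surjective_endomorphism H hHsurj
    have hdetH : IsUnit (LinearMap.det H) := by
      have h := LinearEquiv.isUnit_det' (LinearEquiv.ofBijective H ⟨hHinj, hHsurj⟩)
      exact h
    have hdetB : IsUnit (LinearMap.toMatrix b1 b1 H).det := by
      rw [LinearMap.det_toMatrix]
      exact hdetH
    have hA1B : ∀ i k, A1 i k = ((p : ℤ_[p]) ^ a) * (LinearMap.toMatrix b1 b1 H) i k := by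
      intro i k
      show b1.repr (Fr1 (b1 k)) i = _
      rw [hFrH, map_smul, Finsupp.smul_apply, smul_eq_mul, LinearMap.toMatrix_apply]
    have hdetw' : (A1 - w' • 1).det ≠ 0 := by
      have hfact : A1 - w' • (1 : Matrix _ _ ℤ_[p])
          = ((p : ℤ_[p]) ^ a) • ((LinearMap.toMatrix b1 b1 H) - ((p : ℤ_[p]) ^ a * u') • 1) := by
        ext i k
        simp only [Matrix.sub_apply, Matrix.smul_apply, smul_eq_mul, hA1B, hw'def]
        rw [two_mul, pow_add]
        ring
      rw [hfact, Matrix.det_smul]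
      refine mul_ne_zero (pow_ne_zero _ hq0) ?_
      apply aux_det_ne
      rw [aux_map_sub_smul_one]
      have hπ : PadicInt.toZMod ((p : ℤ_[p]) ^ a * u') = 0 := by
        rw [map_mul, map_pow, map_natCast, ZMod.natCast_self, zero_pow (by omega), zero_mul]
      rw [hπ, zero_smul, sub_zero]
      rw [← RingHom.mapMatrix_apply, ← RingHom.map_det]
      exact (hdetB.map PadicInt.toZMod).ne_zero
    have hx1 : x1 = 0 := hexcl1 w' hdetw' x1 h1 e1
    have hconj_in : conj je' ∈ N2 := by
      rw [hxeq, hx0, hx1, zero_add, zero_add] at *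
      exact h2
    intro x hx
    obtain ⟨z, hz⟩ := Submodule.mem_span_singleton.mp (by rw [← hN0sing]; exact hx)
    rw [← hz, hconjs]
    exact Submodule.smul_mem _ _ hconj_in
end
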